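/- Let T be a p×p real matrix, e the all-ones vector in ℝ^p, t := −T e, and π ∈ ℝ^p. Let c, m ∈ ℝ with c·I − T and m·I − T invertible, and suppose d := π·((c·I − T)⁻¹ t) ≠ 0. Define the row vector π̃ := (1/d) · π (c·I − T)⁻¹ (−T) and the matrix T̃ := T − c·I. Then: (a) π̃·e = 1; and (b) π·((m·I − T)⁻¹ t) / d = π̃·(((m − c)·I − T̃)⁻¹ ((−T̃) e)). (In the frailty model with cumulative hazard M, taking c = M(s) and m = M(y + s), this says that the conditional distribution of the remaining survival time given survival past time s is again a phase-type frailty model, with initial vector π̃, sub-intensity matrix T̃ = T − M(s)I, and baseline hazard μ̃(y) = μ(y + s).) -/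

import Mathlib

open Matrix MeasureTheory

/-- The conditional distribution of the remaining survival time in a phase-type frailty
model is again a phase-type frailty model: with `d = π (cI - T)⁻¹ t ≠ 0`,
`π̃ = (1/d) π (cI - T)⁻¹ (-T)` and `T̃ = T - cI`, one has `π̃ e = 1` and
`π ((mI - T)⁻¹ t) / d = π̃ (((m - c)I - T̃)⁻¹ (-T̃) e)`. -/
theorem phaseTypeFrailty_residual {p : ℕ} (T : Matrix (Fin p) (Fin p) ℝ)
    (e : Fin p → ℝ) (he : e = fun _ => 1) (t : Fin p → ℝ) (ht : t = (-T) *ᵥ e)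
    (π : Fin p → ℝ) (c m : ℝ)
    (hc : IsUnit (c • (1 : Matrix (Fin p) (Fin p) ℝ) - T))
    (hm : IsUnit (m • (1 : Matrix (Fin p) (Fin p) ℝ) - T))
    (d : ℝ) (hd : d = π ⬝ᵥ ((c • (1 : Matrix (Fin p) (Fin p) ℝ) - T)⁻¹ *ᵥ t))
    (hdne : d ≠ 0)
    (πt : Fin p → ℝ)
    (hπt : πt = (1 / d) • ((π ᵥ* (c • (1 : Matrix (Fin p) (Fin p) ℝ) - T)⁻¹) ᵥ* (-T)))
    (Tt : Matrix (Fin p) (Fin p) ℝ) (hTt : Tt = T - c • (1 : Matrix (Fin p) (Fin p) ℝ)) :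
    πt ⬝ᵥ e = 1 ∧
    (π ⬝ᵥ ((m • (1 : Matrix (Fin p) (Fin p) ℝ) - T)⁻¹ *ᵥ t)) / d =
      πt ⬝ᵥ (((m - c) • (1 : Matrix (Fin p) (Fin p) ℝ) - Tt)⁻¹ *ᵥ ((-Tt) *ᵥ e)) := by
  set A : Matrix (Fin p) (Fin p) ℝ := c • (1 : Matrix (Fin p) (Fin p) ℝ) - T with hA
  set B : Matrix (Fin p) (Fin p) ℝ := m • (1 : Matrix (Fin p) (Fin p) ℝ) - T with hB
  have hAd : IsUnit A.det := (Matrix.isUnit_iff_isUnit_det A).mp hc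
  have hBd : IsUnit B.det := (Matrix.isUnit_iff_isUnit_det B).mp hm
  have hAinv : A⁻¹ * A = 1 := Matrix.nonsing_inv_mul A hAd
  have hAinv' : A * A⁻¹ = 1 := Matrix.mul_nonsing_inv A hAd
  have hBinv : B⁻¹ * B = 1 := Matrix.nonsing_inv_mul B hBd
  have hBinv' : B * B⁻¹ = 1 := Matrix.mul_nonsing_inv B hBd
  -- T commutes with A and B
  have hTA : T * A = A * T := by
    simp [hA, mul_sub, sub_mul, mul_smul_comm, smul_mul_assoc]
  have hTB : T * B = B * T := by
    simp [hB, mul_sub, sub_mul, mul_smul_comm, smul_mul_assoc]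
  have hTAinv : T * A⁻¹ = A⁻¹ * T := by
    calc T * A⁻¹ = A⁻¹ * (A * T) * A⁻¹ := by rw [← Matrix.mul_assoc, hAinv, Matrix.one_mul]
    _ = A⁻¹ * (T * A) * A⁻¹ := by rw [hTA]
    _ = A⁻¹ * T * (A * A⁻¹) := by simp [Matrix.mul_assoc]
    _ = A⁻¹ * T := by rw [hAinv', Matrix.mul_one]
  have hTBinv : T * B⁻¹ = B⁻¹ * T := by
    calc T * B⁻¹ = B⁻¹ * (B * T) * B⁻¹ := by rw [← Matrix.mul_assoc, hBinv, Matrix.one_mul]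
    _ = B⁻¹ * (T * B) * B⁻¹ := by rw [hTB]
    _ = B⁻¹ * T * (B * B⁻¹) := by simp [Matrix.mul_assoc]
    _ = B⁻¹ * T := by rw [hBinv', Matrix.mul_one]
  have hnegTA : -T * A = A * -T := by
    simp only [Matrix.neg_mul, Matrix.mul_neg, hTA]
  have hnegTAinv : A⁻¹ * -T = -T * A⁻¹ := by
    simp only [Matrix.neg_mul, Matrix.mul_neg, hTAinv]
  have hnegTBinv : -T * B⁻¹ = B⁻¹ * -T := by
    simp only [Matrix.neg_mul, Matrix.mul_neg, hTBinv]
  have hAB : A * B = B * A := by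
    simp only [hA, hB, mul_sub, sub_mul, Matrix.mul_smul, Matrix.smul_mul,
      Matrix.one_mul, Matrix.mul_one, smul_sub, smul_smul]
    rw [mul_comm c m]
    abel
  have h2 : A * B⁻¹ = B⁻¹ * A := by
    calc A * B⁻¹ = B⁻¹ * (B * A) * B⁻¹ := by rw [← Matrix.mul_assoc, hBinv, Matrix.one_mul]
    _ = B⁻¹ * (A * B) * B⁻¹ := by rw [hAB]
    _ = B⁻¹ * A * (B * B⁻¹) := by simp only [Matrix.mul_assoc]
    _ = B⁻¹ * A := by rw [hBinv', Matrix.mul_one]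
  -- key matrix identity
  have key : A⁻¹ * -T * B⁻¹ * A = B⁻¹ * -T := by
    calc A⁻¹ * -T * B⁻¹ * A
        = A⁻¹ * (-T * B⁻¹) * A := by rw [Matrix.mul_assoc A⁻¹]
    _ = A⁻¹ * (B⁻¹ * -T) * A := by rw [hnegTBinv]
    _ = A⁻¹ * B⁻¹ * (-T * A) := by simp only [Matrix.mul_assoc]
    _ = A⁻¹ * B⁻¹ * (A * -T) := by rw [hnegTA]
    _ = A⁻¹ * (B⁻¹ * A) * -T := by simp only [Matrix.mul_assoc]
    _ = A⁻¹ * (A * B⁻¹) * -T := by rw [h2]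
    _ = A⁻¹ * A * (B⁻¹ * -T) := by simp only [Matrix.mul_assoc]
    _ = B⁻¹ * -T := by rw [hAinv, Matrix.one_mul]
  have hBmat : (m - c) • (1 : Matrix (Fin p) (Fin p) ℝ) - Tt = B := by
    rw [hTt, hB]; rw [sub_smul]; abel
  have hnegTt : -Tt = A := by rw [hTt, hA]; abel
  constructor
  · rw [hπt, smul_dotProduct, ← Matrix.dotProduct_mulVec, ← Matrix.dotProduct_mulVec,
      ← ht, ← hd]
    rw [smul_eq_mul]
    field_simp
  · rw [hπt, hBmat, hnegTt, smul_dotProduct, ← Matrix.dotProduct_mulVec,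
      ← Matrix.dotProduct_mulVec]
    rw [Matrix.mulVec_mulVec, Matrix.mulVec_mulVec, Matrix.mulVec_mulVec]
    rw [key, ← Matrix.mulVec_mulVec, ← ht, smul_eq_mul]
    ring
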